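/- Let α₁, α₂, β₁, β₂ ∈ ℂ and let 𝔻 be a two-mode displacement operator with parameters (−β₁, −α₂). Then 𝔻(coh α₁ ⊠ coh α₂ + coh β₁ ⊠ coh β₂) = exp(i·Im(α₁·conj(β₁))) • (coh(α₁−β₁) ⊠ coh 0) + exp(−i·Im(α₂·conj(β₂))) • (coh 0 ⊠ coh(β₂−α₂)). In particular, if Im(α₁·conj(β₁)) + Im(α₂·conj(β₂)) = 2nπ for some integer n, then 𝔻(coh α₁ ⊠ coh α₂ + coh β₁ ⊠ coh β₂) = exp(i·Im(α₁·conj(β₁))) • (coh(α₁−β₁) ⊠ coh 0 + coh 0 ⊠ coh(β₂−α₂)), so the state coh α₁ ⊠ coh α₂ + coh β₁ ⊠ coh β₂ is locally equivalent to an entangled coherent state. -/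

import Mathlib

open scoped ComplexConjugate ENNReal

/-- The components of the coherent state `|α⟩`: `exp(−|α|²/2)·αⁿ/√(n!)`. -/
noncomputable def cohFun (α : ℂ) : ℕ → ℂ := fun n =>
  (Real.exp (-‖α‖ ^ 2 / 2) / Real.sqrt (Nat.factorial n) : ℝ) * α ^ n

lemma cohFun_memℓp (α : ℂ) : Memℓp (cohFun α) 2 := by
  apply memℓp_gen
  have h : Summable (fun n : ℕ =>
      Real.exp (-‖α‖ ^ 2 / 2) ^ 2 * ((‖α‖ ^ 2) ^ n / (Nat.factorial n))) :=
    (Real.summable_pow_div_factorial (‖α‖ ^ 2)).mul_left _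
  refine h.congr fun n => ?_
  have h2 : ((2 : ℝ≥0∞).toReal) = (2 : ℝ) := by norm_num
  rw [h2, Real.rpow_two]
  have hn : ‖cohFun α n‖ = Real.exp (-‖α‖ ^ 2 / 2) / Real.sqrt (Nat.factorial n) * ‖α‖ ^ n := by
    simp only [cohFun, norm_mul, norm_pow, Complex.norm_real, Real.norm_eq_abs]
    rw [abs_of_pos (by positivity)]
  rw [hn, mul_pow, div_pow, Real.sq_sqrt (by positivity), pow_right_comm]
  ring

/-- The coherent state `|α⟩` as an element of `ℓ²(ℕ, ℂ)`. -/
noncomputable def coh (α : ℂ) : lp (fun _ : ℕ => ℂ) 2 := ⟨cohFun α, cohFun_memℓp α⟩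

/-- The product state `ψ ⊠ χ` in the two-mode space `ℓ²(ℕ×ℕ, ℂ)`,
with components `(ψ ⊠ χ)(n, m) = ψ n · χ m`. -/
noncomputable def tmul (ψ χ : lp (fun _ : ℕ => ℂ) 2) : lp (fun _ : ℕ × ℕ => ℂ) 2 :=
  ⟨fun q => ψ q.1 * χ q.2, by
    apply memℓp_gen
    have hψ := (lp.memℓp ψ).summable (p := 2) (by norm_num)
    have hχ := (lp.memℓp χ).summable (p := 2) (by norm_num)
    refine (hψ.mul_of_nonneg hχ (fun n => Real.rpow_nonneg (norm_nonneg _) _)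
      (fun n => Real.rpow_nonneg (norm_nonneg _) _)).congr fun q => ?_
    rw [norm_mul, Real.mul_rpow (norm_nonneg _) (norm_nonneg _)]⟩

/-- A two-mode displacement operator with parameters `(γ, δ)`: a linear isometric
equivalence of `ℓ²(ℕ×ℕ, ℂ)` acting on product coherent states in the prescribed way. -/
def IsTwoModeDisplacement
    (𝔻 : lp (fun _ : ℕ × ℕ => ℂ) 2 ≃ₗᵢ[ℂ] lp (fun _ : ℕ × ℕ => ℂ) 2) (γ δ : ℂ) : Prop :=
  ∀ β β' : ℂ, 𝔻 (tmul (coh β) (coh β')) =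
    Complex.exp ((γ * conj β - conj γ * β) / 2 + (δ * conj β' - conj δ * β') / 2) •
      tmul (coh (γ + β)) (coh (δ + β'))

/-- local equivalence of `coh α₁ ⊠ coh α₂ + coh β₁ ⊠ coh β₂` to an
entangled coherent state, via the two-mode displacement with parameters `(−β₁, −α₂)`. -/
theorem displaced_general_ecs (α₁ α₂ β₁ β₂ : ℂ)
    (𝔻 : lp (fun _ : ℕ × ℕ => ℂ) 2 ≃ₗᵢ[ℂ] lp (fun _ : ℕ × ℕ => ℂ) 2)
    (h𝔻 : IsTwoModeDisplacement 𝔻 (-β₁) (-α₂)) :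
    𝔻 (tmul (coh α₁) (coh α₂) + tmul (coh β₁) (coh β₂))
      = Complex.exp (Complex.I * (((α₁ * conj β₁).im : ℝ) : ℂ)) • tmul (coh (α₁ - β₁)) (coh 0)
      + Complex.exp (-(Complex.I * (((α₂ * conj β₂).im : ℝ) : ℂ))) • tmul (coh 0) (coh (β₂ - α₂)) ∧
    ((∃ n : ℤ, (α₁ * conj β₁).im + (α₂ * conj β₂).im = 2 * (n : ℝ) * Real.pi) →
      𝔻 (tmul (coh α₁) (coh α₂) + tmul (coh β₁) (coh β₂))
        = Complex.exp (Complex.I * (((α₁ * conj β₁).im : ℝ) : ℂ)) •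
            (tmul (coh (α₁ - β₁)) (coh 0) + tmul (coh 0) (coh (β₂ - α₂)))) := by
  have h1 := h𝔻 α₁ α₂
  have h2 := h𝔻 β₁ β₂
  have e1 : (-β₁ * conj α₁ - conj (-β₁) * α₁) / 2 + (-α₂ * conj α₂ - conj (-α₂) * α₂) / 2
      = Complex.I * (((α₁ * conj β₁).im : ℝ) : ℂ) := by
    have h := Complex.sub_conj (α₁ * conj β₁)
    simp only [map_mul, map_neg, Complex.conj_conj] at h ⊢
    push_cast at h
    linear_combination h / 2
  have e2 : (-β₁ * conj β₁ - conj (-β₁) * β₁) / 2 + (-α₂ * conj β₂ - conj (-α₂) * β₂) / 2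
      = -(Complex.I * (((α₂ * conj β₂).im : ℝ) : ℂ)) := by
    have h := Complex.sub_conj (α₂ * conj β₂)
    simp only [map_mul, map_neg, Complex.conj_conj] at h ⊢
    push_cast at h
    linear_combination -h / 2
  rw [e1] at h1
  rw [e2] at h2
  have main : 𝔻 (tmul (coh α₁) (coh α₂) + tmul (coh β₁) (coh β₂))
      = Complex.exp (Complex.I * (((α₁ * conj β₁).im : ℝ) : ℂ)) • tmul (coh (α₁ - β₁)) (coh 0)
      + Complex.exp (-(Complex.I * (((α₂ * conj β₂).im : ℝ) : ℂ))) •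
          tmul (coh 0) (coh (β₂ - α₂)) := by
    rw [map_add, h1, h2, show -β₁ + α₁ = α₁ - β₁ from by ring,
      show -α₂ + α₂ = (0 : ℂ) from by ring, show -β₁ + β₁ = (0 : ℂ) from by ring,
      show -α₂ + β₂ = β₂ - α₂ from by ring]
  refine ⟨main, ?_⟩
  rintro ⟨n, hn⟩
  have hexp : Complex.exp (-(Complex.I * (((α₂ * conj β₂).im : ℝ) : ℂ)))
      = Complex.exp (Complex.I * (((α₁ * conj β₁).im : ℝ) : ℂ)) := by
    have hc : (((α₁ * conj β₁).im : ℝ) : ℂ) + (((α₂ * conj β₂).im : ℝ) : ℂ)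
        = 2 * (n : ℂ) * (Real.pi : ℂ) := by
      have := congrArg (fun r : ℝ => (r : ℂ)) hn
      push_cast at this
      exact this
    have harg : -(Complex.I * (((α₂ * conj β₂).im : ℝ) : ℂ))
        = Complex.I * (((α₁ * conj β₁).im : ℝ) : ℂ)
          + ((-n : ℤ) : ℂ) * (2 * (Real.pi : ℂ) * Complex.I) := by
      push_cast
      linear_combination -Complex.I * hc
    rw [harg, Complex.exp_add, Complex.exp_int_mul_two_pi_mul_I, mul_one]
  rw [main, hexp, smul_add]
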